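/- Let m ≥ 3 be odd, g(x) = Σ_{k=(m+1)/2}^{m} C(m,k) x^k (1−x)^{m−k}, and h(x) = g(1/2 + x) − 1/2 on [−1/2, 1/2]. Then there exists ε₀ > 0 such that for every ℓ ≥ 1 and every ε ∈ (0, ε₀): ε^{((m+1)/2)^ℓ} ≤ 1/2 − h^{(ℓ)}(1/2 − ε) ≤ (9ε)^{((m+1)/2)^ℓ}, where h^{(ℓ)} is the ℓ-fold composition of h. -/

import Mathlib

/-- The majority polynomial: probability that `Bin(m,x) ≥ (m+1)/2`. -/
noncomputable def majPoly (m : ℕ) (x : ℝ) : ℝ :=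
  ∑ k ∈ Finset.Icc ((m + 1) / 2) m, (m.choose k : ℝ) * x ^ k * (1 - x) ^ (m - k)

/-- `h(x) = g(1/2 + x) − 1/2`, the recentered majority polynomial. -/
noncomputable def majH (m : ℕ) (x : ℝ) : ℝ := majPoly m (1/2 + x) - 1/2

lemma sum_one (m : ℕ) (x : ℝ) :
    ∑ k ∈ Finset.Icc 0 m, (m.choose k : ℝ) * x ^ k * (1 - x) ^ (m - k) = 1 := by
  have h := add_pow x (1 - x) m
  rw [add_sub_cancel, one_pow] at h
  rw [show Finset.Icc 0 m = Finset.range (m+1) by rw [← Nat.Ico_zero_eq_range, Finset.Ico_add_one_right_eq_Icc]]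
  calc ∑ k ∈ Finset.range (m+1), (m.choose k : ℝ) * x ^ k * (1 - x) ^ (m - k)
      = ∑ k ∈ Finset.range (m+1), x ^ k * (1 - x) ^ (m - k) * (m.choose k : ℝ) := by
        apply Finset.sum_congr rfl; intro k _; ring
    _ = 1 := h.symm

lemma choose_ge (t : ℕ) : 2 ^ t ≤ (2*t+1).choose (t+1) := by
  induction t with
  | zero => simp
  | succ n ih =>
    have h1 : (2*(n+1)+1).choose (n+1+1) = (2*n+2).choose (n+1) + (2*n+2).choose (n+2) := by
      have := Nat.choose_succ_succ (2*n+2) (n+1)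
      convert this using 2 <;> omega
    have h2 : (2*n+2).choose (n+1) = (2*n+1).choose n + (2*n+1).choose (n+1) := by
      have := Nat.choose_succ_succ (2*n+1) n
      convert this using 2 <;> omega
    have h3 : (2*n+1).choose n = (2*n+1).choose (n+1) := by
      have := Nat.choose_symm (show n+1 ≤ 2*n+1 by omega)
      rw [show 2*n+1-(n+1) = n by omega] at this
      omega
    calc 2 ^ (n+1) = 2 ^ n + 2 ^ n := by ring
    _ ≤ (2*n+1).choose n + (2*n+1).choose (n+1) := by rw [h3]; omega
    _ ≤ (2*(n+1)+1).choose (n+1+1) := by omega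

lemma two_pow_le : ∀ t : ℕ, 1 ≤ t → (2:ℕ) ^ (2*t+1) ≤ 9 ^ t := by
  intro t ht
  induction t, ht using Nat.le_induction with
  | base => norm_num
  | succ n hn ih =>
    calc (2:ℕ) ^ (2*(n+1)+1) = 4 * 2 ^ (2*n+1) := by ring
      _ ≤ 4 * 9 ^ n := by exact Nat.mul_le_mul_left 4 ih
      _ ≤ 9 ^ (n+1) := by
          rw [pow_succ, mul_comm]
          exact Nat.mul_le_mul le_rfl (by norm_num)

lemma majPoly_symm (t : ℕ) (x : ℝ) :
    majPoly (2*t+1) (1 - x) = 1 - majPoly (2*t+1) x := by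
  have hd : (2*t+1+1)/2 = t+1 := by omega
  have hsplit : ∑ k ∈ Finset.Icc 0 (2*t+1), ((2*t+1).choose k : ℝ) * x ^ k * (1-x) ^ (2*t+1-k)
      = (∑ k ∈ Finset.Icc 0 t, ((2*t+1).choose k : ℝ) * x ^ k * (1-x) ^ (2*t+1-k))
        + ∑ k ∈ Finset.Icc (t+1) (2*t+1), ((2*t+1).choose k : ℝ) * x ^ k * (1-x) ^ (2*t+1-k) := by
    rw [← Finset.sum_union]
    · congr 1
      ext k
      simp only [Finset.mem_union, Finset.mem_Icc]
      omega
    · rw [Finset.disjoint_left]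
      intro a ha hb
      simp only [Finset.mem_Icc] at ha hb
      omega
  have hre : majPoly (2*t+1) (1-x)
      = ∑ k ∈ Finset.Icc 0 t, ((2*t+1).choose k : ℝ) * x ^ k * (1-x) ^ (2*t+1-k) := by
    unfold majPoly
    rw [hd]
    rw [show (1 - (1-x)) = x from by ring]
    apply Finset.sum_nbij' (fun k => 2*t+1-k) (fun k => 2*t+1-k)
    · intro a ha
      simp only [Finset.mem_Icc] at ha ⊢
      omega
    · intro a ha
      simp only [Finset.mem_Icc] at ha ⊢
      omega
    · intro a ha
      simp only [Finset.mem_Icc] at ha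
      omega
    · intro a ha
      simp only [Finset.mem_Icc] at ha
      omega
    · intro a ha
      simp only [Finset.mem_Icc] at ha
      rw [Nat.choose_symm (show a ≤ 2*t+1 by omega)]
      rw [show 2*t+1-(2*t+1-a) = a by omega]
      ring
  have h1 := sum_one (2*t+1) x
  rw [hsplit] at h1
  rw [hre]
  unfold majPoly
  rw [hd]
  linarith

lemma majPoly_lower (t : ℕ) (x : ℝ) (hx0 : 0 ≤ x) (hx : x ≤ 1/2) :
    x ^ (t+1) ≤ majPoly (2*t+1) x := by
  have hd : (2*t+1+1)/2 = t+1 := by omega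
  unfold majPoly
  rw [hd]
  have h1x : (0:ℝ) ≤ 1 - x := by linarith
  have hterm : ((2*t+1).choose (t+1) : ℝ) * x ^ (t+1) * (1-x) ^ (2*t+1-(t+1))
      ≤ ∑ k ∈ Finset.Icc (t+1) (2*t+1), ((2*t+1).choose k : ℝ) * x ^ k * (1-x) ^ (2*t+1-k) := by
    apply Finset.single_le_sum (f := fun k => ((2*t+1).choose k : ℝ) * x ^ k * (1-x) ^ (2*t+1-k))
    · intro i _
      positivity
    · simp only [Finset.mem_Icc]; omega
  refine le_trans ?_ hterm
  rw [show 2*t+1-(t+1) = t by omega]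
  have hc : (2:ℝ) ^ t ≤ ((2*t+1).choose (t+1) : ℝ) := by
    exact_mod_cast choose_ge t
  have hp : ((1:ℝ)/2) ^ t ≤ (1-x) ^ t := by
    apply pow_le_pow_left₀ (by norm_num) (by linarith)
  calc x ^ (t+1) = (2:ℝ)^t * ((1/2:ℝ)^t) * x ^ (t+1) := by
        rw [← mul_pow]; norm_num
    _ ≤ ((2*t+1).choose (t+1) : ℝ) * (1-x)^t * x^(t+1) := by
        apply mul_le_mul_of_nonneg_right _ (by positivity)
        apply mul_le_mul hc hp (by positivity) (by positivity)
    _ = ((2*t+1).choose (t+1) : ℝ) * x ^ (t+1) * (1-x) ^ t := by ring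

lemma majPoly_upper (t : ℕ) (x : ℝ) (hx0 : 0 ≤ x) (hx : x ≤ 1) (ht : 1 ≤ t) :
    majPoly (2*t+1) x ≤ 9 ^ t * x ^ (t+1) := by
  have hd : (2*t+1+1)/2 = t+1 := by omega
  unfold majPoly
  rw [hd]
  have h1x : (0:ℝ) ≤ 1 - x := by linarith
  have hstep : ∑ k ∈ Finset.Icc (t+1) (2*t+1), ((2*t+1).choose k : ℝ) * x ^ k * (1-x) ^ (2*t+1-k)
      ≤ ∑ k ∈ Finset.Icc (t+1) (2*t+1), ((2*t+1).choose k : ℝ) * x ^ (t+1) := by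
    apply Finset.sum_le_sum
    intro k hk
    simp only [Finset.mem_Icc] at hk
    calc ((2*t+1).choose k : ℝ) * x ^ k * (1-x) ^ (2*t+1-k)
        ≤ ((2*t+1).choose k : ℝ) * x ^ (t+1) * 1 := by
          apply mul_le_mul _ (show (1-x)^(2*t+1-k) ≤ 1 from pow_le_one₀ h1x (by linarith)) (by positivity) (by positivity)
          apply mul_le_mul_of_nonneg_left _ (by positivity)
          exact pow_le_pow_of_le_one hx0 hx hk.1
      _ = ((2*t+1).choose k : ℝ) * x ^ (t+1) := by ring
  refine le_trans hstep ?_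
  rw [← Finset.sum_mul]
  apply mul_le_mul_of_nonneg_right _ (by positivity)
  have hsum : ∑ k ∈ Finset.Icc (t+1) (2*t+1), ((2*t+1).choose k) ≤ 2 ^ (2*t+1) := by
    calc ∑ k ∈ Finset.Icc (t+1) (2*t+1), ((2*t+1).choose k)
        ≤ ∑ k ∈ Finset.Icc 0 (2*t+1), ((2*t+1).choose k) := by
          apply Finset.sum_le_sum_of_subset
          intro a; simp only [Finset.mem_Icc]; omega
      _ = 2 ^ (2*t+1) := by
          rw [show Finset.Icc 0 (2*t+1) = Finset.range (2*t+2) by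
            rw [← Nat.Ico_zero_eq_range, ← Finset.Ico_add_one_right_eq_Icc (b := 2*t+1)]; rfl]
          exact Nat.sum_range_choose (2*t+1)
  have h29 : (2:ℕ) ^ (2*t+1) ≤ 9 ^ t := two_pow_le t ht
  calc ∑ k ∈ Finset.Icc (t+1) (2*t+1), (((2*t+1).choose k : ℕ) : ℝ)
      = ((∑ k ∈ Finset.Icc (t+1) (2*t+1), ((2*t+1).choose k) : ℕ) : ℝ) := by
        push_cast; ring
    _ ≤ ((9:ℕ)^t : ℝ) := by exact_mod_cast le_trans hsum h29
    _ = (9:ℝ)^t := by push_cast; ring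

lemma majH_step (t : ℕ) (η : ℝ) :
    majH (2*t+1) (1/2 - η) = 1/2 - majPoly (2*t+1) η := by
  unfold majH
  rw [show (1/2 : ℝ) + (1/2 - η) = 1 - η by ring, majPoly_symm]
  ring

theorem majH_iterate_near_fixed_point (m : ℕ) (hm : Odd m) (hm3 : 3 ≤ m) :
    ∃ ε₀ > (0:ℝ), ∀ ℓ : ℕ, 1 ≤ ℓ → ∀ ε : ℝ, ε ∈ Set.Ioo 0 ε₀ →
      ε ^ (((m + 1) / 2) ^ ℓ) ≤ 1/2 - (majH m)^[ℓ] (1/2 - ε) ∧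
      1/2 - (majH m)^[ℓ] (1/2 - ε) ≤ (9 * ε) ^ (((m + 1) / 2) ^ ℓ) := by
  obtain ⟨t, ht⟩ := hm
  subst ht
  have ht1 : 1 ≤ t := by omega
  have hd : (2*t+1+1)/2 = t+1 := by omega
  refine ⟨1/9, by norm_num, ?_⟩
  intro ℓ hℓ ε hε
  obtain ⟨hε0, hε9⟩ := hε
  have key : ∀ n : ℕ, 1 ≤ n → ε ^ ((t+1)^n) ≤ 1/2 - (majH (2*t+1))^[n] (1/2 - ε) ∧
      1/2 - (majH (2*t+1))^[n] (1/2 - ε) ≤ (9*ε) ^ ((t+1)^n) / 9 := by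
    intro n hn
    induction n, hn using Nat.le_induction with
    | base =>
      rw [Function.iterate_one, majH_step,
        show (1:ℝ)/2 - (1/2 - majPoly (2*t+1) ε) = majPoly (2*t+1) ε by ring, pow_one]
      constructor
      · exact majPoly_lower t ε hε0.le (by linarith)
      · refine le_trans (majPoly_upper t ε hε0.le (by linarith) ht1) ?_
        rw [mul_pow, pow_succ]
        ring_nf
        rfl
    | succ n hn ih =>
      set η : ℝ := 1/2 - (majH (2*t+1))^[n] (1/2 - ε) with hηdef
      obtain ⟨ihl, ihu⟩ := ih
      have hεD : 0 < ε ^ ((t+1)^n) := pow_pos hε0 _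
      have hη0 : 0 < η := lt_of_lt_of_le hεD ihl
      have h9ε1 : (9*ε) ^ ((t+1)^n) ≤ 1 := pow_le_one₀ (by linarith) (by linarith)
      have hη12 : η ≤ 1/2 := by
        refine le_trans ihu ?_
        linarith
      have hX : (majH (2*t+1))^[n] (1/2 - ε) = 1/2 - η := by rw [hηdef]; ring
      rw [Function.iterate_succ_apply', hX, majH_step,
        show (1:ℝ)/2 - (1/2 - majPoly (2*t+1) η) = majPoly (2*t+1) η by ring]
      constructor
      · refine le_trans ?_ (majPoly_lower t η hη0.le hη12)
        calc ε ^ ((t+1)^(n+1)) = (ε ^ ((t+1)^n)) ^ (t+1) := by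
              rw [← pow_mul, pow_succ]
          _ ≤ η ^ (t+1) := pow_le_pow_left₀ hεD.le ihl _
      · refine le_trans (majPoly_upper t η hη0.le (hη12.trans (by norm_num)) ht1) ?_
        have hstep : η ^ (t+1) ≤ ((9*ε) ^ ((t+1)^n) / 9) ^ (t+1) :=
          pow_le_pow_left₀ hη0.le ihu _
        calc (9:ℝ)^t * η^(t+1) ≤ 9^t * (((9*ε) ^ ((t+1)^n) / 9) ^ (t+1)) := by
              apply mul_le_mul_of_nonneg_left hstep (by positivity)
          _ = (9*ε) ^ ((t+1)^(n+1)) / 9 := by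
              rw [div_pow, ← pow_mul,
                show (t+1)^n * (t+1) = (t+1)^(n+1) by rw [pow_succ],
                pow_succ (9:ℝ) t]
              field_simp
  obtain ⟨hl, hu⟩ := key ℓ hℓ
  rw [hd]
  refine ⟨hl, le_trans hu ?_⟩
  apply div_le_self (by positivity) (by norm_num)
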